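/- Let A, C ∈ ℝ^{n×n}, B, D ∈ ℝ^{n×m}, let R ∈ ℝ^{m×m} be symmetric positive definite, let P ∈ ℝ^{n×n} be symmetric positive semidefinite, and let γ ≥ 0. Define L₁ = −(R + γBᵀPB + γDᵀPD)⁻¹(γBᵀPA + γDᵀPC). Then for every L ∈ ℝ^{m×n}, the matrix [γ(A+BL)ᵀP(A+BL) + γ(C+DL)ᵀP(C+DL) + LᵀRL] − [γ(A+BL₁)ᵀP(A+BL₁) + γ(C+DL₁)ᵀP(C+DL₁) + L₁ᵀRL₁] is positive semidefinite; that is, the policy-improvement gain L₁ minimizes the one-step Lyapunov operator in the Loewner order. -/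

import Mathlib

open Matrix

theorem stmt8 {n m : ℕ} (A C : Matrix (Fin n) (Fin n) ℝ)
    (B D : Matrix (Fin n) (Fin m) ℝ)
    (R : Matrix (Fin m) (Fin m) ℝ) (P : Matrix (Fin n) (Fin n) ℝ) (γ : ℝ)
    (hR : R.PosDef) (hP : P.PosSemidef) (hγ : 0 ≤ γ)
    (L₁ : Matrix (Fin m) (Fin n) ℝ)
    (hL₁ : L₁ = -((R + γ • (Bᵀ * P * B) + γ • (Dᵀ * P * D))⁻¹ *
      (γ • (Bᵀ * P * A) + γ • (Dᵀ * P * C)))) :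
    ∀ L : Matrix (Fin m) (Fin n) ℝ,
      ((γ • ((A + B * L)ᵀ * P * (A + B * L)) +
          γ • ((C + D * L)ᵀ * P * (C + D * L)) + Lᵀ * R * L) -
        (γ • ((A + B * L₁)ᵀ * P * (A + B * L₁)) +
          γ • ((C + D * L₁)ᵀ * P * (C + D * L₁)) + L₁ᵀ * R * L₁)).PosSemidef := by
  intro L
  -- Q := γ • P is PosSemidef
  set Q : Matrix (Fin n) (Fin n) ℝ := γ • P with hQdef
  have hPt : Pᵀ = P := by
    have := hP.isHermitian.eq
    simpa [conjTranspose_eq_transpose_of_trivial] using this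
  have hQ : Q.PosSemidef := by
    constructor
    · show Qᴴ = Q
      simp [hQdef, conjTranspose_smul, hPt, hP.isHermitian.eq]
    · intro x
      have := hP.2 x
      have h := mul_nonneg hγ this
      simp only [Finsupp.mul_sum] at h
      convert h using 1
      simp only [hQdef, Matrix.smul_apply, smul_eq_mul]
      apply Finsupp.sum_congr; intro i _; apply Finsupp.sum_congr; intro j _; ring
  have hQt : Qᵀ = Q := by
    have := hQ.isHermitian.eq
    simpa [conjTranspose_eq_transpose_of_trivial] using this
  -- rewrite γ-smuls
  have hsm : ∀ (X Y : Matrix (Fin n) (Fin m) ℝ),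
      γ • (Xᵀ * P * Y) = Xᵀ * Q * Y := by
    intro X Y
    simp [hQdef, Matrix.mul_smul, Matrix.smul_mul]
  have hsm' : ∀ (X Y : Matrix (Fin n) (Fin n) ℝ),
      γ • (Xᵀ * P * Y) = Xᵀ * Q * Y := by
    intro X Y
    simp [hQdef, Matrix.mul_smul, Matrix.smul_mul]
  set G : Matrix (Fin m) (Fin m) ℝ := R + Bᵀ * Q * B + Dᵀ * Q * D with hGdef
  set W : Matrix (Fin m) (Fin n) ℝ := Bᵀ * Q * A + Dᵀ * Q * C with hWdef
  have hGold : R + γ • (Bᵀ * P * B) + γ • (Dᵀ * P * D) = G := by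
    rw [hGdef, hsm, hsm]
  have hsm2 : ∀ (X : Matrix (Fin n) (Fin m) ℝ) (Y : Matrix (Fin n) (Fin n) ℝ),
      γ • (Xᵀ * P * Y) = Xᵀ * Q * Y := by
    intro X Y
    simp [hQdef, Matrix.mul_smul, Matrix.smul_mul]
  have hWold : γ • (Bᵀ * P * A) + γ • (Dᵀ * P * C) = W := by
    rw [hWdef, hsm2, hsm2]
  have hG : G.PosDef := by
    refine (hR.add_posSemidef ?_).add_posSemidef ?_
    · exact hQ.conjTranspose_mul_mul_same B
    · exact hQ.conjTranspose_mul_mul_same D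
  have hGt : Gᵀ = G := by
    have := hG.isHermitian.eq
    simpa [conjTranspose_eq_transpose_of_trivial] using this
  have hWt : Wᵀ = Aᵀ * Q * B + Cᵀ * Q * D := by
    simp [hWdef, transpose_mul, hQt, Matrix.mul_assoc]
  have hGL₁ : G * L₁ = -W := by
    rw [hL₁, hGold, hWold, Matrix.mul_neg, ← Matrix.mul_assoc,
      Matrix.mul_nonsing_inv _ (isUnit_iff_ne_zero.mpr hG.det_pos.ne'), Matrix.one_mul]
  have hL₁G : L₁ᵀ * G = -Wᵀ := by
    have : (G * L₁)ᵀ = (-W)ᵀ := by rw [hGL₁]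
    rw [transpose_mul, hGt] at this
    simpa using this
  -- expansion lemma
  have expand : ∀ M : Matrix (Fin m) (Fin n) ℝ,
      γ • ((A + B * M)ᵀ * P * (A + B * M)) +
        γ • ((C + D * M)ᵀ * P * (C + D * M)) + Mᵀ * R * M =
      (Aᵀ * Q * A + Cᵀ * Q * C) + Mᵀ * G * M + Mᵀ * W + Wᵀ * M := by
    intro M
    have h1 : γ • ((A + B * M)ᵀ * P * (A + B * M)) =
        (A + B * M)ᵀ * Q * (A + B * M) := by
      simp [hQdef, Matrix.mul_smul, Matrix.smul_mul]
    have h2 : γ • ((C + D * M)ᵀ * P * (C + D * M)) =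
        (C + D * M)ᵀ * Q * (C + D * M) := by
      simp [hQdef, Matrix.mul_smul, Matrix.smul_mul]
    rw [h1, h2, hGdef, hWt, hWdef]
    simp only [transpose_add, transpose_mul, Matrix.add_mul, Matrix.mul_add,
      Matrix.mul_assoc]
    abel
  have key : ((γ • ((A + B * L)ᵀ * P * (A + B * L)) +
          γ • ((C + D * L)ᵀ * P * (C + D * L)) + Lᵀ * R * L) -
        (γ • ((A + B * L₁)ᵀ * P * (A + B * L₁)) +
          γ • ((C + D * L₁)ᵀ * P * (C + D * L₁)) + L₁ᵀ * R * L₁)) =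
      (L - L₁)ᵀ * G * (L - L₁) := by
    rw [expand L, expand L₁]
    have e1 : (L - L₁)ᵀ * G * (L - L₁)
        = Lᵀ * G * L - Lᵀ * (G * L₁) - L₁ᵀ * G * L + L₁ᵀ * G * L₁ := by
      simp only [transpose_sub, Matrix.sub_mul, Matrix.mul_sub, Matrix.mul_assoc]
      abel
    rw [e1, hGL₁]
    have e2 : L₁ᵀ * G * L = -Wᵀ * L := by rw [hL₁G]
    have e3 : L₁ᵀ * G * L₁ = -Wᵀ * L₁ := by rw [hL₁G]
    rw [e2, e3]
    have e5 : L₁ᵀ * W = Wᵀ * L₁ := by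
      have hW' : W = -(G * L₁) := by rw [hGL₁, neg_neg]
      rw [hW']
      simp [transpose_neg, transpose_mul, hGt, Matrix.mul_neg, Matrix.neg_mul,
        Matrix.mul_assoc]
    rw [e5]
    simp only [Matrix.neg_mul, Matrix.mul_neg]
    abel
  rw [key]
  have := hG.posSemidef.conjTranspose_mul_mul_same (L - L₁)
  simpa [conjTranspose_eq_transpose_of_trivial] using this
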